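/- arXiv:2112.13325 — 2 statements merged into one kernel-verified Lean document; each statement's English description precedes it below -/
import Mathlib

section
/- Let l ≥ 1 be an integer and γ ∈ (0, 2l) real. Define c₁ = l/(2l-γ) and c_{k+1} = -γ(l-k)c_k/(2l-γ) for 1 ≤ k ≤ l-1, with c_k = 0 for k > l. Then b_k(s) := c_k s^{-k} solves, for all s > 0 and all 1 ≤ k ≤ l (with b_{l+1} := 0): b_k'(s) + (2k-γ) b₁(s) b_k(s) - b_{k+1}(s) = 0. -/
theorem stmt13 (l : ℕ) (hl : 1 ≤ l) (γ : ℝ) (hγ : 0 < γ) (hγ2 : γ < 2 * l)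
    (c : ℕ → ℝ) (hc1 : c 1 = (l : ℝ) / (2 * l - γ))
    (hrec : ∀ k : ℕ, 1 ≤ k → k ≤ l - 1 →
      c (k + 1) = -(γ * ((l : ℝ) - k) / (2 * l - γ)) * c k)
    (hzero : ∀ k : ℕ, l < k → c k = 0) :
    ∀ s : ℝ, 0 < s → ∀ k : ℕ, 1 ≤ k → k ≤ l →
      deriv (fun t => c k / t ^ k) s
        + (2 * (k : ℝ) - γ) * (c 1 / s ^ 1) * (c k / s ^ k)
        - c (k + 1) / s ^ (k + 1) = 0 := by
  intro s hs k hk1 hkl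
  have hs0 : s ≠ 0 := ne_of_gt hs
  have hsk : s ^ k ≠ 0 := pow_ne_zero _ hs0
  have hderiv : HasDerivAt (fun t : ℝ => c k / t ^ k)
      (-(c k * (k * s ^ (k - 1)) / (s ^ k) ^ 2)) s := by
    have h1 : HasDerivAt (fun t : ℝ => t ^ k) ((k : ℝ) * s ^ (k - 1)) s :=
      hasDerivAt_pow k s
    simpa [div_eq_mul_inv, mul_comm, mul_assoc, neg_div] using
      (h1.inv hsk).const_mul (c k)
  rw [hderiv.deriv]
  have hden : (2 * (l : ℝ) - γ) ≠ 0 := by linarith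
  have hrec' : c (k + 1) = -(γ * ((l : ℝ) - k) / (2 * l - γ)) * c k := by
    rcases lt_or_eq_of_le hkl with h | h
    · exact hrec k hk1 (by omega)
    · subst h
      rw [hzero (k + 1) (by omega)]
      simp
  have hkpow : s ^ (k - 1) * s = s ^ k := by
    rw [← pow_succ]
    congr 1
    omega
  rw [hrec', hc1, show s ^ (k + 1) = s ^ (k - 1) * s * s by rw [hkpow, ← pow_succ],
    show s ^ k = s ^ (k - 1) * s from hkpow.symm]
  field_simp
  ring
end

section
/- Let l ≥ 1 integer, γ ∈ (0,2l), c_k as above (c₁ = l/(2l-γ), c_{k+1} = -γ(l-k)c_k/(2l-γ)). Define the l×l matrix A_l by: a_{1,1} = γ(l-1)/(2l-γ) - (2-γ)c₁; a_{i,i} = γ(l-i)/(2l-γ) for 2 ≤ i ≤ l; a_{i,i+1} = 1 for 1 ≤ i ≤ l-1; a_{i,1} = -(2i-γ)c_i for 2 ≤ i ≤ l; all other entries 0. Then the eigenvalues of A_l are exactly {-1} ∪ {kγ/(2l-γ) : 2 ≤ k ≤ l}, i.e., A_l is diagonalizable with A_l = P⁻¹ D P where D = diag(-1, 2γ/(2l-γ),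 3γ/(2l-γ), …, lγ/(2l-γ)). -/
open Finset

noncomputable def Ee (l : ℕ) (i : ℕ) : ℝ := ∏ m ∈ range i, ((l:ℝ) - 1 - (m:ℝ))

noncomputable def pp (l : ℕ) (γ μ : ℝ) (j : ℕ) : ℝ :=
  ∏ m ∈ Ico (j+1) l, (μ - γ * ((l:ℝ) - 1 - (m:ℝ)) / (2*(l:ℝ) - γ))

lemma Ee_succ (l i : ℕ) : Ee l (i+1) = Ee l i * ((l:ℝ) - 1 - i) := prod_range_succ _ _

lemma Ee_zero (l : ℕ) : Ee l 0 = 1 := prod_range_zero _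

lemma Ee_l (l : ℕ) (hl : 1 ≤ l) : Ee l l = 0 := by
  apply prod_eq_zero (i := l-1) (mem_range.2 (by omega))
  have : ((l-1 : ℕ):ℝ) = (l:ℝ) - 1 := by
    push_cast [Nat.cast_sub hl]; ring
  rw [this]; ring

lemma pp_last (l : ℕ) (hl : 1 ≤ l) (γ μ : ℝ) : pp l γ μ (l-1) = 1 := by
  unfold pp; rw [show l-1+1 = l by omega, Ico_self, prod_empty]

lemma pp_peel (l : ℕ) (γ μ : ℝ) (j : ℕ) (h : j + 1 < l) :
    pp l γ μ j = (μ - γ * ((l:ℝ) - 1 - ((j:ℝ)+1)) / (2*(l:ℝ) - γ)) * pp l γ μ (j+1) := by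
  unfold pp
  rw [prod_eq_prod_Ico_succ_bot h]
  congr 1
  push_cast
  ring

set_option maxHeartbeats 2000000 in
theorem stmt14 (l : ℕ) (hl : 2 ≤ l) (γ : ℝ) (hγ : 0 < γ) (hγ2 : γ < 2 * l)
    (hdist : ∀ k : ℕ, 2 ≤ k → k ≤ l → (k : ℝ) * γ / (2 * (l : ℝ) - γ) ≠ -1)
    (c : ℕ → ℝ) (hc1 : c 1 = (l : ℝ) / (2 * l - γ))
    (hrec : ∀ k : ℕ, 1 ≤ k → k ≤ l - 1 →
      c (k + 1) = -(γ * ((l : ℝ) - k) / (2 * l - γ)) * c k) :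
    let A : Matrix (Fin l) (Fin l) ℝ := fun i j =>
      if (i : ℕ) = 0 ∧ (j : ℕ) = 0 then γ * ((l : ℝ) - 1) / (2 * l - γ) - (2 - γ) * c 1
      else if i = j then γ * ((l : ℝ) - ((i : ℕ) + 1)) / (2 * l - γ)
      else if (j : ℕ) = (i : ℕ) + 1 then 1
      else if (j : ℕ) = 0 then -(2 * (((i : ℕ) : ℝ) + 1) - γ) * c ((i : ℕ) + 1)
      else 0
    let D : Matrix (Fin l) (Fin l) ℝ :=
      Matrix.diagonal (fun i => if (i : ℕ) = 0 then -1 else (((i : ℕ) : ℝ) + 1) * γ / (2 * l - γ))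
    ∃ P : Matrix (Fin l) (Fin l) ℝ, IsUnit P ∧ A = P⁻¹ * D * P := by
  intro A D
  have hA : A = fun (i j : Fin l) =>
      if (i : ℕ) = 0 ∧ (j : ℕ) = 0 then γ * ((l : ℝ) - 1) / (2 * l - γ) - (2 - γ) * c 1
      else if i = j then γ * ((l : ℝ) - ((i : ℕ) + 1)) / (2 * l - γ)
      else if (j : ℕ) = (i : ℕ) + 1 then 1
      else if (j : ℕ) = 0 then -(2 * (((i : ℕ) : ℝ) + 1) - γ) * c ((i : ℕ) + 1)
      else 0 := rfl
  have hD : D = Matrix.diagonal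
      (fun i : Fin l => if (i : ℕ) = 0 then -1 else (((i : ℕ) : ℝ) + 1) * γ / (2 * l - γ)) := rfl
  have hβ : (0:ℝ) < 2 * (l:ℝ) - γ := by linarith
  have hβ0 : (2 * (l:ℝ) - γ) ≠ 0 := ne_of_gt hβ
  have hβ0' : ((l:ℝ) * 2 - γ) ≠ 0 := by linarith
  set μ : Fin l → ℝ := fun r => if (r : ℕ) = 0 then -1 else (((r:ℕ):ℝ)+1) * γ / (2*(l:ℝ)-γ)
    with hμdef
  set P : Matrix (Fin l) (Fin l) ℝ := Matrix.of fun r j => pp l γ (μ r) (j:ℕ) with hPdef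
  -- closed form for c
  have hc' : ∀ i : ℕ, i ≤ l - 1 →
      c (i+1) = (-(γ/(2*(l:ℝ)-γ)))^i * ((l:ℝ) * Ee l i) / (2*(l:ℝ)-γ) := by
    intro i
    induction i with
    | zero => intro _; simp [hc1, Ee_zero]
    | succ n ih =>
      intro hn
      rw [hrec (n+1) (by omega) hn, ih (by omega), Ee_succ]
      push_cast
      ring
  -- column 0 identity
  have hl0 : 0 < l := by omega
  have key0 : ∀ r : Fin l, ∑ i : Fin l, pp l γ (μ r) (i:ℕ) * A i ⟨0, hl0⟩
      = μ r * pp l γ (μ r) 0 := by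
    intro r
    set aa : ℕ → ℝ := fun m => if m = 0 then γ*((l:ℝ)-1)/(2*(l:ℝ)-γ) - (2-γ)*c 1
      else -(2*((m:ℝ)+1)-γ)*c (m+1) with haa
    have hAcol : ∀ i : Fin l, A i ⟨0, hl0⟩ = aa (i:ℕ) := by
      intro i
      rw [hA]
      simp only [haa]
      by_cases h : (i:ℕ) = 0
      · simp [h]
      · have h2 : i ≠ ⟨0, hl0⟩ := by simp [Fin.ext_iff, h]
        simp [h, h2, (show ¬((0:ℕ) = (i:ℕ)+1) by omega)]
    have hEe1 : Ee l 1 = (l:ℝ) - 1 := by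
      rw [show (1:ℕ) = 0 + 1 from rfl, Ee_succ, Ee_zero]
      push_cast; ring
    have step1 : ∑ i : Fin l, pp l γ (μ r) (i:ℕ) * A i ⟨0, hl0⟩
        = pp l γ (μ r) 0 * aa 0 + ∑ m ∈ Finset.range (l-1), pp l γ (μ r) (1+m) * aa (1+m) := by
      rw [show (∑ i : Fin l, pp l γ (μ r) (i:ℕ) * A i ⟨0, hl0⟩)
          = ∑ i : Fin l, (fun m => pp l γ (μ r) m * aa m) (i:ℕ) from
          Finset.sum_congr rfl fun i _ => by rw [hAcol i],
        Fin.sum_univ_eq_sum_range (fun m => pp l γ (μ r) m * aa m) l,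
        Finset.range_eq_Ico, Finset.sum_eq_sum_Ico_succ_bot hl0,
        Finset.sum_Ico_eq_sum_range]
    rw [step1]
    by_cases hr : (r:ℕ) = 0
    · have hμr : μ r = -1 := by rw [hμdef]; simp [hr]
      set g : ℕ → ℝ := fun m => (-1:ℝ)^(m+1) * ((m:ℝ)+2) * (γ/(2*(l:ℝ)-γ))^(m+1)
        * Ee l (m+1) * pp l γ (μ r) m with hg
      have hstep : ∀ m, m + 2 ≤ l → pp l γ (μ r) (1+m) * aa (1+m) = g m - g (m+1) := by
        intro m hm
        rw [Nat.add_comm 1 m]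
        simp only [hg, haa]
        rw [if_neg (show ¬(m+1 = 0) by omega), hc' (m+1) (by omega),
          pp_peel l γ (μ r) m (by omega), Ee_succ l (m+1), hμr, neg_pow]
        push_cast
        simp only [div_pow]
        field_simp
        ring
      have hsum : ∑ m ∈ Finset.range (l-1), pp l γ (μ r) (1+m) * aa (1+m) = g 0 - g (l-1) := by
        rw [Finset.sum_congr rfl (fun m hm => hstep m (by
          have := Finset.mem_range.mp hm; omega))]
        exact Finset.sum_range_sub' g (l-1)
      have hgl : g (l-1) = 0 := by
        simp only [hg]
        rw [show l - 1 + 1 = l from by omega, Ee_l l (by omega)]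
        ring
      rw [hsum, hgl]
      simp only [hg, haa, if_pos rfl]
      rw [hc1, hEe1, hμr]
      push_cast
      field_simp
      ring
    · have hk1 : (1:ℝ) ≤ ((r:ℕ):ℝ) := by exact_mod_cast (by omega : 1 ≤ (r:ℕ))
      have hk0 : ((r:ℕ):ℝ) ≠ 0 := by linarith
      have hk0' : ((r:ℕ):ℝ) + 1 ≠ 0 := by linarith
      have hμr : μ r = (((r:ℕ):ℝ)+1)*γ/(2*(l:ℝ)-γ) := by rw [hμdef]; simp [hr]
      set q : ℕ → ℝ := fun i => ((l:ℝ) - (((r:ℕ):ℝ)+1) + (γ/(2*(l:ℝ)-γ))*(((r:ℕ):ℝ)+1)*((l:ℝ)-1)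
        - (1+γ/(2*(l:ℝ)-γ))*(((r:ℕ):ℝ)+1)*(i:ℝ)) / ((((r:ℕ):ℝ)+1)*((r:ℕ):ℝ)) with hq
      set g : ℕ → ℝ := fun m => (-1:ℝ)^(m+1) * Ee l (m+1) * (γ/(2*(l:ℝ)-γ))^m * q (m+1)
        * pp l γ (μ r) m with hg
      have hstep : ∀ m, m + 2 ≤ l → pp l γ (μ r) (1+m) * aa (1+m) = g m - g (m+1) := by
        intro m hm
        rw [Nat.add_comm 1 m]
        simp only [hg, hq, haa]
        rw [if_neg (show ¬(m+1 = 0) by omega), hc' (m+1) (by omega),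
          pp_peel l γ (μ r) m (by omega), Ee_succ l (m+1), hμr, neg_pow]
        push_cast
        simp only [div_pow]
        field_simp
        ring
      have hsum : ∑ m ∈ Finset.range (l-1), pp l γ (μ r) (1+m) * aa (1+m) = g 0 - g (l-1) := by
        rw [Finset.sum_congr rfl (fun m hm => hstep m (by
          have := Finset.mem_range.mp hm; omega))]
        exact Finset.sum_range_sub' g (l-1)
      have hgl : g (l-1) = 0 := by
        simp only [hg]
        rw [show l - 1 + 1 = l from by omega, Ee_l l (by omega)]
        ring
      rw [hsum, hgl]
      have huni : μ r * pp l γ (μ r) 0 = pp l γ (μ r) 0 * aa 0 + g 0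
          + ((((l:ℝ) - (((r:ℕ):ℝ)+1)) * ((l:ℝ) - (((r:ℕ):ℝ)+1) - 1)
            * (1 + (((r:ℕ):ℝ)+1)*γ/(2*(l:ℝ)-γ)) / ((((r:ℕ):ℝ)+1)*((r:ℕ):ℝ)))
            * pp l γ (μ r) 0) := by
        simp only [hg, hq, haa, if_pos rfl]
        rw [hc1, hEe1, hμr]
        field_simp
        ring
      have hR : ((((l:ℝ) - (((r:ℕ):ℝ)+1)) * ((l:ℝ) - (((r:ℕ):ℝ)+1) - 1)
            * (1 + (((r:ℕ):ℝ)+1)*γ/(2*(l:ℝ)-γ)) / ((((r:ℕ):ℝ)+1)*((r:ℕ):ℝ)))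
            * pp l γ (μ r) 0) = 0 := by
        by_cases hcase : (r:ℕ) + 3 ≤ l
        · have hp0 : pp l γ (μ r) 0 = 0 := by
            unfold pp
            apply Finset.prod_eq_zero (i := l - 2 - (r:ℕ))
              (by simp only [Finset.mem_Ico]; omega)
            have hcast : ((l - 2 - (r:ℕ) : ℕ):ℝ) = (l:ℝ) - 2 - ((r:ℕ):ℝ) := by
              rw [show l - 2 - (r:ℕ) = l - (2 + (r:ℕ)) from by omega,
                Nat.cast_sub (by omega)]
              push_cast; ring
            rw [hμr, hcast]
            field_simp
            ring
          rw [hp0]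
          ring
        · rcases (by omega : (r:ℕ) = l - 2 ∨ (r:ℕ) = l - 1) with h | h
          · have hcast : ((r:ℕ):ℝ) = (l:ℝ) - 2 := by
              rw [h, Nat.cast_sub (by omega)]; push_cast; ring
            rw [hcast]
            ring
          · have hcast : ((r:ℕ):ℝ) = (l:ℝ) - 1 := by
              rw [h, Nat.cast_sub (by omega)]; push_cast; ring
            rw [hcast]
            ring
      rw [sub_zero, huni, hR]
      ring
  -- the matrix equation
  have keyPA : P * A = D * P := by
    ext r j
    rw [Matrix.mul_apply, hD, Matrix.diagonal_mul]
    by_cases hj : (j:ℕ) = 0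
    · rw [show j = ⟨0, hl0⟩ from Fin.ext hj]
      exact key0 r
    · obtain ⟨n, hn⟩ : ∃ n, (j:ℕ) = n + 1 := ⟨(j:ℕ)-1, by omega⟩
      have hnl : n + 1 < l := by omega
      have hAij : ∀ i : Fin l, A i j =
          (if i = j then γ * ((l:ℝ) - (((j:ℕ):ℝ) + 1)) / (2*(l:ℝ)-γ) else 0)
          + (if (j:ℕ) = (i:ℕ) + 1 then 1 else 0) := by
        intro i
        rw [hA]
        simp only []
        have h0 : ¬((i:ℕ) = 0 ∧ (j:ℕ) = 0) := by simp [hj]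
        rw [if_neg h0]
        by_cases h1 : i = j
        · subst h1
          rw [if_pos rfl, if_pos rfl, if_neg (by omega : ¬((i:ℕ) = (i:ℕ) + 1))]
          ring
        · rw [if_neg h1, if_neg h1]
          by_cases h2 : (j:ℕ) = (i:ℕ) + 1
          · rw [if_pos h2, if_pos h2]; ring
          · rw [if_neg h2, if_neg h2, if_neg hj]; ring
      set jp : Fin l := ⟨n, by omega⟩ with hjpdef
      have hne : jp ≠ j := by simp [hjpdef, Fin.ext_iff]; omega
      have hjp : ∀ i : Fin l, ((j:ℕ) = (i:ℕ) + 1) ↔ i = jp := by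
        intro i; rw [Fin.ext_iff]; simp [hjpdef]; omega
      calc ∑ i : Fin l, P r i * A i j
          = ∑ i : Fin l, ((if i = j then P r i * (γ * ((l:ℝ) - (((j:ℕ):ℝ) + 1)) / (2*(l:ℝ)-γ)) else 0)
            + (if i = jp then P r i else 0)) := by
            refine Finset.sum_congr rfl fun i _ => ?_
            rw [hAij i]; simp only [hjp i]
            by_cases h1 : i = j
            · have h2 : i ≠ jp := by rw [h1]; exact Ne.symm hne
              simp only [if_pos h1, if_neg h2]
              ring
            · simp only [if_neg h1]
              by_cases h2 : i = jp
              · simp only [if_pos h2]; ring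
              · simp only [if_neg h2]; ring
        _ = P r j * (γ * ((l:ℝ) - (((j:ℕ):ℝ) + 1)) / (2*(l:ℝ)-γ)) + P r jp := by
            rw [Finset.sum_add_distrib, Finset.sum_ite_eq' univ, Finset.sum_ite_eq' univ]
            simp
        _ = μ r * P r j := by
            have hPj : P r j = pp l γ (μ r) (n+1) := by
              show pp l γ (μ r) (j:ℕ) = _
              rw [hn]
            have hPn : P r jp = pp l γ (μ r) n := rfl
            rw [hPj, hPn, pp_peel l γ (μ r) n hnl, hn]
            push_cast
            ring
  -- invertibility
  have hPunit : IsUnit P := by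
    rw [← Matrix.linearIndependent_rows_iff_isUnit]
    have hinj : Function.Injective μ := by
      intro r s h
      by_cases hr : (r:ℕ) = 0 <;> by_cases hs : (s:ℕ) = 0
      · exact Fin.ext (by omega)
      · exfalso
        rw [hμdef] at h
        simp only [hr, hs, if_true, if_false, ite_true, ite_false] at h
        refine hdist ((s:ℕ)+1) (by omega) (by omega) ?_
        push_cast
        exact h.symm
      · exfalso
        rw [hμdef] at h
        simp only [hr, hs, if_true, if_false, ite_true, ite_false] at h
        refine hdist ((r:ℕ)+1) (by omega) (by omega) ?_
        push_cast
        exact h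
      · rw [hμdef] at h
        simp only [hr, hs, if_true, if_false, ite_true, ite_false] at h
        field_simp at h
        exact Fin.ext (Nat.cast_inj.mp (add_right_cancel h))
    have heig : ∀ r : Fin l, Module.End.HasEigenvector (Matrix.mulVecLin A.transpose) (μ r) (P r) := by
      intro r
      constructor
      · rw [Module.End.mem_eigenspace_iff]
        funext j
        have h2 : (P * A) r j = (D * P) r j := by rw [keyPA]
        rw [Matrix.mul_apply, hD, Matrix.diagonal_mul] at h2
        show Matrix.mulVec A.transpose (P r) j = _
        simp only [Matrix.mulVec, dotProduct, Matrix.transpose_apply]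
        simp only [Pi.smul_apply, smul_eq_mul]
        rw [← h2]
        exact Finset.sum_congr rfl fun i _ => mul_comm _ _
      · intro h0
        have h1 := congrFun h0 ⟨l-1, by omega⟩
        have h2 : P r ⟨l-1, by omega⟩ = 1 := pp_last l (by omega) γ (μ r)
        rw [h2] at h1
        exact one_ne_zero h1
    exact Module.End.eigenvectors_linearIndependent' (Matrix.mulVecLin A.transpose) μ hinj
      (fun r => P r) heig
  refine ⟨P, hPunit, ?_⟩
  have h1 : P⁻¹ * P = 1 := Matrix.nonsing_inv_mul P ((Matrix.isUnit_iff_isUnit_det P).mp hPunit)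
  calc A = 1 * A := (one_mul A).symm
    _ = P⁻¹ * P * A := by rw [h1]
    _ = P⁻¹ * (P * A) := by rw [Matrix.mul_assoc]
    _ = P⁻¹ * (D * P) := by rw [keyPA]
    _ = P⁻¹ * D * P := by rw [Matrix.mul_assoc]
end
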